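/- Let α ∈ (0,1), T > 0, and let h : [0,T] → ℝ be C¹ with h(0) = h'(0) = 0 and [h']_{α/2;[0,T]} < ∞. Let v(t,y) = ∫₀^t P(s,y) h(t-s) ds. Then there exists a constant C = C(α, T) such that for all y ≥ 0 and all t₁, t₂ ∈ [0,T], |∂_t v(t₁, y) - ∂_t v(t₂, y)| ≤ C [h']_{α/2;[0,T]} |t₁ - t₂|^{α/2}. -/

import Mathlib

open MeasureTheory Real

/-- The Poisson (boundary) kernel for the heat equation on the half-line. -/
noncomputable def heatP (s y : ℝ) : ℝ :=
  y / (2 * Real.sqrt Real.pi * s ^ ((3:ℝ)/2)) * Real.exp (-(y^2) / (4*s))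

/-- The representation of the time derivative `∂ₜ v` of the solution
`v(t,y) = ∫₀ᵗ P(s,y) h(t-s) ds`, namely
`∂ₜ v(t,y) = ∫₀^∞ P(r,1) h̃'(t - y² r) dr`, where `h̃'` is the extension of
`h'` by zero to negative times. -/
noncomputable def dtv (h' : ℝ → ℝ) (t y : ℝ) : ℝ :=
  ∫ r in Set.Ioi (0:ℝ), heatP r 1 * (if 0 ≤ t - y^2 * r then h' (t - y^2 * r) else 0)

lemma heatP_nonneg {r : ℝ} (hr : 0 < r) : 0 ≤ heatP r 1 := by
  unfold heatP
  have h1 : (0:ℝ) < Real.sqrt Real.pi := Real.sqrt_pos.mpr Real.pi_pos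
  have h2 : (0:ℝ) < r ^ ((3:ℝ)/2) := Real.rpow_pos_of_pos hr _
  positivity

lemma measurable_heatP1 : Measurable (fun r : ℝ => heatP r 1) := by
  unfold heatP
  fun_prop

lemma heatP_integrable : IntegrableOn (fun r : ℝ => heatP r 1) (Set.Ioi 0) := by
  have hsm : AEStronglyMeasurable (fun r : ℝ => heatP r 1)
      (volume.restrict (Set.Ioi (0:ℝ))) := measurable_heatP1.aestronglyMeasurable
  have hπ : (0:ℝ) < Real.sqrt Real.pi := Real.sqrt_pos.mpr Real.pi_pos
  rw [show Set.Ioi (0:ℝ) = Set.Ioc 0 1 ∪ Set.Ioi 1 by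
    rw [Set.Ioc_union_Ioi_eq_Ioi]; norm_num]
  apply IntegrableOn.union
  · -- on (0,1]: bounded by constant 32/√π
    apply Integrable.mono' (integrable_const (32 / Real.sqrt Real.pi))
      (hsm.mono_measure (Measure.restrict_mono (by
        intro x hx; exact hx.1) le_rfl))
    rw [ae_restrict_iff' measurableSet_Ioc]
    filter_upwards with r hr
    have hr0 : 0 < r := hr.1
    have h2 : (0:ℝ) < r ^ ((3:ℝ)/2) := Real.rpow_pos_of_pos hr0 _
    rw [Real.norm_eq_abs, abs_of_nonneg (heatP_nonneg hr0)]
    unfold heatP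
    have hx : (0:ℝ) < 1/(4*r) := by positivity
    -- exp (x) ≥ (x/2)^2 hence exp(-x) ≤ 4/x^2
    have hexp : Real.exp (-(1^2) / (4*r)) ≤ 4 * (4*r)^2 := by
      have h3 : (1/(8*r)) ≤ Real.exp (1/(8*r)) := (Real.add_one_le_exp _).trans' (by linarith)
      have h4 : (1/(8*r))^2 ≤ Real.exp (1/(4*r)) := by
        have := mul_le_mul h3 h3 (by positivity) (Real.exp_nonneg _)
        rwa [← Real.exp_add, show (1/(8*r) + 1/(8*r)) = 1/(4*r) by ring, ← sq] at this
      have h5 : Real.exp (-(1^2)/(4*r)) = (Real.exp (1/(4*r)))⁻¹ := by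
        rw [← Real.exp_neg]; ring_nf
      rw [h5]
      rw [inv_le_comm₀ (Real.exp_pos _) (by positivity)] at *
      calc (4 * (4*r)^2)⁻¹ = (1/(8*r))^2 := by field_simp; ring
        _ ≤ Real.exp (1/(4*r)) := h4
    calc 1 / (2 * Real.sqrt Real.pi * r ^ ((3:ℝ)/2)) * Real.exp (-(1^2) / (4*r))
        ≤ 1 / (2 * Real.sqrt Real.pi * r ^ ((3:ℝ)/2)) * (4 * (4*r)^2) := by
          apply mul_le_mul_of_nonneg_left hexp (by positivity)
      _ = (32 / Real.sqrt Real.pi) * (r^2 / r ^ ((3:ℝ)/2)) := by ring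
      _ ≤ (32 / Real.sqrt Real.pi) * 1 := by
          apply mul_le_mul_of_nonneg_left _ (by positivity)
          rw [div_le_one h2]
          calc r^2 = r ^ ((2:ℝ)) := by norm_num [Real.rpow_natCast r 2]
            _ ≤ r ^ ((3:ℝ)/2) := by
              apply Real.rpow_le_rpow_of_exponent_ge hr0 hr.2; norm_num
      _ = 32 / Real.sqrt Real.pi := mul_one _
  · -- on (1,∞): bounded by (2√π)⁻¹ r^(-3/2)
    have hint : IntegrableOn (fun x : ℝ => (2 * Real.sqrt Real.pi)⁻¹ * x ^ (-(3:ℝ)/2))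
        (Set.Ioi 1) := by
      apply Integrable.const_mul
      exact integrableOn_Ioi_rpow_of_lt (by norm_num) one_pos
    apply Integrable.mono' hint
      (hsm.mono_measure (Measure.restrict_mono (by
        intro x hx; exact lt_trans one_pos (Set.mem_Ioi.mp hx)) le_rfl))
    rw [ae_restrict_iff' measurableSet_Ioi]
    filter_upwards with r hr
    have hr0 : (0:ℝ) < r := lt_trans one_pos hr
    have h2 : (0:ℝ) < r ^ ((3:ℝ)/2) := Real.rpow_pos_of_pos hr0 _
    rw [Real.norm_eq_abs, abs_of_nonneg (heatP_nonneg hr0)]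
    unfold heatP
    have hexp : Real.exp (-(1^2) / (4*r)) ≤ 1 := by
      rw [Real.exp_le_one_iff]; rw [neg_div]; simp only [neg_nonpos]; positivity
    calc 1 / (2 * Real.sqrt Real.pi * r ^ ((3:ℝ)/2)) * Real.exp (-(1^2) / (4*r))
        ≤ 1 / (2 * Real.sqrt Real.pi * r ^ ((3:ℝ)/2)) * 1 := by
          apply mul_le_mul_of_nonneg_left hexp (by positivity)
      _ = (2 * Real.sqrt Real.pi)⁻¹ * r ^ (-(3:ℝ)/2) := by
          rw [show (-(3:ℝ)/2) = -((3:ℝ)/2) by norm_num, Real.rpow_neg hr0.le]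
          field_simp
      _ ≤ (2 * Real.sqrt Real.pi)⁻¹ * r ^ (-(3:ℝ)/2) := le_rfl

theorem time_holder_estimate (α T : ℝ) (hα : α ∈ Set.Ioo (0:ℝ) 1) (hT : 0 < T) :
    ∃ C : ℝ, 0 < C ∧
      ∀ (h h' : ℝ → ℝ), (∀ t, HasDerivAt h (h' t) t) →
        ∀ M : ℝ, 0 ≤ M →
        (∀ s ∈ Set.Icc (0:ℝ) T, ∀ t ∈ Set.Icc (0:ℝ) T,
          |h' s - h' t| ≤ M * |s - t| ^ (α/2)) →
        h 0 = 0 → h' 0 = 0 →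
        ∀ y : ℝ, 0 ≤ y → ∀ t₁ ∈ Set.Icc (0:ℝ) T, ∀ t₂ ∈ Set.Icc (0:ℝ) T,
          |dtv h' t₁ y - dtv h' t₂ y| ≤ C * M * |t₁ - t₂| ^ (α/2) := by
  have hI0 : 0 ≤ ∫ r in Set.Ioi (0:ℝ), heatP r 1 :=
    setIntegral_nonneg measurableSet_Ioi (fun r hr => heatP_nonneg hr)
  set I := ∫ r in Set.Ioi (0:ℝ), heatP r 1 with hIdef
  refine ⟨I + 1, by linarith, ?_⟩
  intro h h' hderiv M hM hHol h0 h'0 y hy t₁ ht₁ t₂ ht₂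
  have hα2 : 0 < α/2 := by have := hα.1; linarith
  have hm : Measurable h' := by
    have : h' = deriv h := funext fun t => ((hderiv t).deriv).symm
    rw [this]; exact measurable_deriv h
  set g : ℝ → ℝ := fun s => if 0 ≤ s then h' s else 0 with hgdef
  have hgm : Measurable g :=
    Measurable.ite (measurableSet_le measurable_const measurable_id) hm measurable_const
  -- Hölder estimate for g on (-∞, T]
  have key : ∀ a b : ℝ, a ≤ T → b ≤ T → b ≤ a → |g a - g b| ≤ M * |a - b| ^ (α/2) := by
    intro a b ha hb hba
    by_cases h0a : 0 ≤ a
    · by_cases h0b : 0 ≤ b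
      · simp only [hgdef, if_pos h0a, if_pos h0b]
        exact hHol a ⟨h0a, ha⟩ b ⟨h0b, hb⟩
      · push_neg at h0b
        simp only [hgdef, if_pos h0a, if_neg (not_le.mpr h0b), sub_zero]
        have h2 := hHol a ⟨h0a, ha⟩ 0 ⟨le_refl 0, hT.le⟩
        rw [h'0, sub_zero, sub_zero] at h2
        refine h2.trans (mul_le_mul_of_nonneg_left ?_ hM)
        apply Real.rpow_le_rpow (abs_nonneg _) _ hα2.le
        rw [abs_of_nonneg h0a, abs_of_nonneg (by linarith : (0:ℝ) ≤ a - b)]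
        linarith
    · push_neg at h0a
      have h0b : b < 0 := lt_of_le_of_lt hba h0a
      simp only [hgdef, if_neg (not_le.mpr h0a), if_neg (not_le.mpr h0b), sub_zero,
        abs_zero]
      positivity
  have hgholder : ∀ a b : ℝ, a ≤ T → b ≤ T → |g a - g b| ≤ M * |a - b| ^ (α/2) := by
    intro a b ha hb
    rcases le_total b a with hba | hab
    · exact key a b ha hb hba
    · rw [abs_sub_comm, abs_sub_comm a b]; exact key b a hb ha hab
  have hgbound : ∀ s : ℝ, s ≤ T → |g s| ≤ M * T ^ (α/2) := by
    intro s hs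
    rcases le_or_gt 0 s with h0s | h0s
    · simp only [hgdef, if_pos h0s]
      have h2 := hHol s ⟨h0s, hs⟩ 0 ⟨le_refl 0, hT.le⟩
      rw [h'0, sub_zero, sub_zero] at h2
      refine h2.trans (mul_le_mul_of_nonneg_left ?_ hM)
      apply Real.rpow_le_rpow (abs_nonneg _) _ hα2.le
      rw [abs_of_nonneg h0s]; exact hs
    · simp only [hgdef, if_neg (not_le.mpr h0s), abs_zero]; positivity
  set f : ℝ → ℝ → ℝ := fun t r => heatP r 1 * g (t - y^2 * r) with hfdef
  have hfm : ∀ t : ℝ, AEStronglyMeasurable (f t) (volume.restrict (Set.Ioi (0:ℝ))) := by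
    intro t
    exact (measurable_heatP1.mul (hgm.comp (measurable_const.sub
      (measurable_const.mul measurable_id)))).aestronglyMeasurable
  have hfint : ∀ t ∈ Set.Icc (0:ℝ) T, IntegrableOn (f t) (Set.Ioi 0) := by
    intro t ht
    apply Integrable.mono' (heatP_integrable.mul_const (M * T ^ (α/2))) (hfm t)
    rw [ae_restrict_iff' measurableSet_Ioi]
    filter_upwards with r hr
    have hr0 : 0 < r := Set.mem_Ioi.mp hr
    have hy2r : 0 ≤ y^2 * r := by positivity
    rw [Real.norm_eq_abs, hfdef]
    simp only
    rw [abs_mul, abs_of_nonneg (heatP_nonneg hr0)]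
    exact mul_le_mul_of_nonneg_left (hgbound _ (by linarith [ht.2])) (heatP_nonneg hr0)
  have hdtv : ∀ t : ℝ, dtv h' t y = ∫ r in Set.Ioi (0:ℝ), f t r := fun t => rfl
  have hsub : dtv h' t₁ y - dtv h' t₂ y = ∫ r in Set.Ioi (0:ℝ), (f t₁ r - f t₂ r) := by
    rw [hdtv, hdtv, integral_sub (hfint t₁ ht₁) (hfint t₂ ht₂)]
  rw [hsub]
  have habs : |∫ r in Set.Ioi (0:ℝ), (f t₁ r - f t₂ r)|
      ≤ ∫ r in Set.Ioi (0:ℝ), |f t₁ r - f t₂ r| := by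
    simpa [Real.norm_eq_abs] using
      norm_integral_le_integral_norm (μ := volume.restrict (Set.Ioi (0:ℝ)))
        (f := fun r => f t₁ r - f t₂ r)
  refine habs.trans ?_
  have hmono : (∫ r in Set.Ioi (0:ℝ), |f t₁ r - f t₂ r|)
      ≤ ∫ r in Set.Ioi (0:ℝ), heatP r 1 * (M * |t₁ - t₂| ^ (α/2)) := by
    apply setIntegral_mono_on (((hfint t₁ ht₁).sub (hfint t₂ ht₂)).abs)
      (heatP_integrable.mul_const _) measurableSet_Ioi
    intro r hr
    have hr0 : 0 < r := Set.mem_Ioi.mp hr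
    have hy2r : 0 ≤ y^2 * r := by positivity
    rw [hfdef]
    simp only [Pi.sub_apply]
    rw [← mul_sub, abs_mul, abs_of_nonneg (heatP_nonneg hr0)]
    apply mul_le_mul_of_nonneg_left _ (heatP_nonneg hr0)
    have := hgholder (t₁ - y^2*r) (t₂ - y^2*r)
      (by linarith [ht₁.2]) (by linarith [ht₂.2])
    simpa [sub_sub_sub_cancel_right] using this
  refine hmono.trans ?_
  rw [integral_mul_const, ← hIdef]
  have hpow : (0:ℝ) ≤ |t₁ - t₂| ^ (α/2) := Real.rpow_nonneg (abs_nonneg _) _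
  nlinarith
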